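/- (Finite support identification of Forward–Backward for the Lasso.) Let Φ : ℝ^N → ℝ^P with columns φ₁,…,φ_N and x₀ ∈ ℝ^N with I = supp(x₀). Assume (φ_i)_{i∈I} is linearly independent and ‖Φ_{I^c}^⊤ Φ_I (Φ_I^⊤Φ_I)^{-1} sign(x₀)_I‖_∞ < 1. Fix a step size τ with 0 < τ < 2/‖Φ‖²_op. Then there exists C > 0 such that whenever 0 < λ ≤ C and ‖w‖ ≤ Cλ, setting y = Φx₀ + w, for any initialization x⁽⁰⁾ ∈ ℝ^N the Forward–Backward iterates x⁽ⁿ⁺¹⁾ = S_{τλ}(x⁽ⁿ⁾ + τ Φ^⊤(y − Φx⁽ⁿ⁾)) satisfy: there exists n₀ such that supp(x⁽ⁿ⁾) ⊆ supp(x₀) for all n ≥ n₀. -/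

import Mathlib

open Matrix

/-- Euclidean dot product on `ℝ^n`. -/
noncomputable def dotp {n : ℕ} (u v : Fin n → ℝ) : ℝ := ∑ i, u i * v i

/-- Euclidean (ℓ²) norm on `ℝ^n`. -/
noncomputable def nrm2 {n : ℕ} (u : Fin n → ℝ) : ℝ := Real.sqrt (∑ i, (u i) ^ 2)

/-- ℓ¹ norm on `ℝ^n`. -/
noncomputable def l1norm {n : ℕ} (u : Fin n → ℝ) : ℝ := ∑ i, |u i|

/-- ℓ^∞ norm of a finitely indexed real vector. -/
noncomputable def linf {ι : Type*} [Fintype ι] (u : ι → ℝ) : ℝ := ⨆ i, |u i|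

/-- The sign function: 1 for positive, -1 for negative, 0 at 0. -/
noncomputable def sgn (t : ℝ) : ℝ := if 0 < t then 1 else if t < 0 then -1 else 0

/-- Subdifferential of a finite-valued function `J : ℝ^n → ℝ` at `x`:
`∂J(x) = {η : J(x+δ) ≥ J(x) + ⟨η,δ⟩ for all δ}`. -/
def subdiff {n : ℕ} (J : (Fin n → ℝ) → ℝ) (x : Fin n → ℝ) : Set (Fin n → ℝ) :=
  {η | ∀ δ, J x + dotp η δ ≤ J (x + δ)}

/-- The model tangent subspace `T_x = Lin(∂J(x))^⊥`, where `Lin(E)` is the linear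
space parallel to the affine hull of `E`. -/
def modelT {n : ℕ} (J : (Fin n → ℝ) → ℝ) (x : Fin n → ℝ) : Set (Fin n → ℝ) :=
  {u | ∀ v ∈ (affineSpan ℝ (subdiff J x)).direction, dotp u v = 0}

/-- Support of `x` as a finite set of indices. -/
noncomputable def suppF {n : ℕ} (x : Fin n → ℝ) : Finset (Fin n) :=
  Finset.univ.filter fun i => x i ≠ 0

/-- The submatrix `Φ_I` of columns of `Φ` indexed by `I`. -/
noncomputable def colsub {N P : ℕ} (Φ : Matrix (Fin P) (Fin N) ℝ) (I : Finset (Fin N)) :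
    Matrix (Fin P) ↥I ℝ := Φ.submatrix id (↑)

/-- The vector `p_F = Φ_I (Φ_I^⊤ Φ_I)⁻¹ s` for a sign vector `s` on `I`. -/
noncomputable def pFvec {N P : ℕ} (Φ : Matrix (Fin P) (Fin N) ℝ) (I : Finset (Fin N))
    (s : ↥I → ℝ) : Fin P → ℝ :=
  (colsub Φ I).mulVec ((((colsub Φ I)ᵀ * (colsub Φ I))⁻¹).mulVec s)

/-- The irrepresentable-condition quantity `‖Φ_{I^c}^⊤ Φ_I (Φ_I^⊤Φ_I)⁻¹ s‖_∞`. -/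
noncomputable def ICval {N P : ℕ} (Φ : Matrix (Fin P) (Fin N) ℝ) (I : Finset (Fin N))
    (s : ↥I → ℝ) : ℝ :=
  linf ((Φ.submatrix id ((↑) : {j // j ∉ I} → Fin N))ᵀ.mulVec (pFvec Φ I s))

/-- Componentwise soft-thresholding `S_γ(u)_i = sign(u_i)·max(|u_i| − γ, 0)`. -/
noncomputable def softmap {n : ℕ} (γ : ℝ) (u : Fin n → ℝ) : Fin n → ℝ :=
  fun i => sgn (u i) * max (|u i| - γ) 0

/-- The ℓ²→ℓ² operator norm of `Φ`. -/
noncomputable def opnorm {N P : ℕ} (Φ : Matrix (Fin P) (Fin N) ℝ) : ℝ :=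
  ⨆ v : {v : Fin N → ℝ // nrm2 v ≤ 1}, nrm2 (Φ.mulVec v)

-- auxiliary
noncomputable def qs {ι : Type*} [Fintype ι] (u : ι → ℝ) : ℝ := ∑ i, u i ^ 2
noncomputable def frobsq {ι κ : Type*} [Fintype ι] [Fintype κ]
    (M : Matrix ι κ ℝ) : ℝ := ∑ i, ∑ j, M i j ^ 2

lemma qs_nonneg {ι : Type*} [Fintype ι] (u : ι → ℝ) : 0 ≤ qs u :=
  Finset.sum_nonneg fun _ _ => sq_nonneg _

lemma qs_eq_zero {ι : Type*} [Fintype ι] {u : ι → ℝ} (h : qs u = 0) : u = 0 := by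
  funext i
  have h1 : ∀ j ∈ Finset.univ, (0:ℝ) ≤ u j ^ 2 := fun _ _ => sq_nonneg _
  have := (Finset.sum_eq_zero_iff_of_nonneg h1).1 h i (Finset.mem_univ i)
  exact pow_eq_zero_iff (n := 2) (by norm_num) |>.1 this

lemma entry_sq_le_qs {ι : Type*} [Fintype ι] (u : ι → ℝ) (i : ι) : u i ^ 2 ≤ qs u :=
  Finset.single_le_sum (fun j _ => sq_nonneg (u j)) (Finset.mem_univ i)

lemma frobsq_nonneg {ι κ : Type*} [Fintype ι] [Fintype κ] (M : Matrix ι κ ℝ) :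
    0 ≤ frobsq M := Finset.sum_nonneg fun _ _ => Finset.sum_nonneg fun _ _ => sq_nonneg _

lemma rowsq_le_frobsq {ι κ : Type*} [Fintype ι] [Fintype κ] (M : Matrix ι κ ℝ) (i : ι) :
    ∑ j, M i j ^ 2 ≤ frobsq M :=
  Finset.single_le_sum (f := fun i => ∑ j, M i j ^ 2)
    (fun l _ => Finset.sum_nonneg fun _ _ => sq_nonneg _) (Finset.mem_univ i)

lemma cs_sq {ι : Type*} [Fintype ι] (u v : ι → ℝ) :
    (∑ i, u i * v i) ^ 2 ≤ qs u * qs v :=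
  Finset.sum_mul_sq_le_sq_mul_sq _ _ _

lemma mulVec_entry_sq_le {ι κ : Type*} [Fintype ι] [Fintype κ]
    (M : Matrix ι κ ℝ) (v : κ → ℝ) (i : ι) :
    (M.mulVec v i) ^ 2 ≤ (∑ j, M i j ^ 2) * qs v := by
  have := Finset.sum_mul_sq_le_sq_mul_sq Finset.univ (fun j => M i j) v
  simpa [Matrix.mulVec, dotProduct, qs] using this

lemma qs_mulVec_le {ι κ : Type*} [Fintype ι] [Fintype κ]
    (M : Matrix ι κ ℝ) (v : κ → ℝ) :
    qs (M.mulVec v) ≤ frobsq M * qs v := by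
  rw [qs, frobsq, Finset.sum_mul]
  exact Finset.sum_le_sum fun i _ => mulVec_entry_sq_le M v i

lemma dot_mulVecT {ι κ : Type*} [Fintype ι] [Fintype κ]
    (M : Matrix ι κ ℝ) (v : ι → ℝ) (u : κ → ℝ) :
    ∑ j, Mᵀ.mulVec v j * u j = ∑ i, v i * M.mulVec u i := by
  simp only [Matrix.mulVec, dotProduct, Matrix.transpose_apply,
    Finset.sum_mul, Finset.mul_sum]
  rw [Finset.sum_comm]
  apply Finset.sum_congr rfl; intro i _; apply Finset.sum_congr rfl; intro j _; ring

lemma abs_le_of_sq_le {x a : ℝ} (h : x ^ 2 ≤ a ^ 2) (ha : 0 ≤ a) : |x| ≤ a := by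
  nlinarith [abs_nonneg x, sq_abs x]

lemma sgn_close {a b : ℝ} (h : |b - a| < |a|) : b ≠ 0 ∧ sgn b = sgn a := by
  rcases lt_trichotomy a 0 with ha | ha | ha
  · rw [abs_of_neg ha, abs_lt] at h
    have hb : b < 0 := by linarith
    refine ⟨ne_of_lt hb, ?_⟩
    unfold sgn
    rw [if_neg (by linarith), if_pos hb, if_neg (by linarith), if_pos ha]
  · subst ha
    rw [abs_zero] at h
    exact absurd h (not_lt.2 (abs_nonneg _))
  · rw [abs_of_pos ha, abs_lt] at h
    have hb : 0 < b := by linarith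
    exact ⟨ne_of_gt hb, by unfold sgn; rw [if_pos hb, if_pos ha]⟩

lemma nrm2_eq {n : ℕ} (u : Fin n → ℝ) : nrm2 u = Real.sqrt (qs u) := rfl

lemma nrm2_nonneg {n : ℕ} (u : Fin n → ℝ) : 0 ≤ nrm2 u := Real.sqrt_nonneg _

lemma nrm2_sq {n : ℕ} (u : Fin n → ℝ) : nrm2 u ^ 2 = qs u := by
  rw [nrm2_eq, Real.sq_sqrt (qs_nonneg u)]

lemma qs_eq_nrm2_sq {n : ℕ} (u : Fin n → ℝ) : qs u = nrm2 u ^ 2 := (nrm2_sq u).symm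

lemma nrm2_smul {n : ℕ} (c : ℝ) (u : Fin n → ℝ) : nrm2 (c • u) = |c| * nrm2 u := by
  rw [nrm2_eq, nrm2_eq]
  have : qs (c • u) = c ^ 2 * qs u := by
    simp [qs, Finset.mul_sum, mul_pow]
  rw [this, Real.sqrt_mul (sq_nonneg c), Real.sqrt_sq_eq_abs]

lemma nrm2_le_of_qs_le {n : ℕ} {u : Fin n → ℝ} {a : ℝ} (h : qs u ≤ a ^ 2) (ha : 0 ≤ a) :
    nrm2 u ≤ a := by
  rw [nrm2_eq]
  calc Real.sqrt (qs u) ≤ Real.sqrt (a ^ 2) := Real.sqrt_le_sqrt h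
  _ = a := by rw [Real.sqrt_sq ha]

lemma qs_le_of_nrm2_le {n : ℕ} {u : Fin n → ℝ} {a : ℝ} (h : nrm2 u ≤ a) :
    qs u ≤ a ^ 2 := by
  rw [qs_eq_nrm2_sq]
  have h0 := nrm2_nonneg u
  nlinarith

lemma opnorm_nonneg {N P : ℕ} (Φ : Matrix (Fin P) (Fin N) ℝ) : 0 ≤ opnorm Φ := by
  have hb : BddAbove (Set.range fun v : {v : Fin N → ℝ // nrm2 v ≤ 1} => nrm2 (Φ.mulVec v)) := by
    refine ⟨Real.sqrt (frobsq Φ), ?_⟩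
    rintro x ⟨v, rfl⟩
    show nrm2 (Φ.mulVec v) ≤ _
    rw [nrm2_eq]
    apply Real.sqrt_le_sqrt
    calc qs (Φ.mulVec v) ≤ frobsq Φ * qs v := qs_mulVec_le _ _
    _ ≤ frobsq Φ * 1 :=
        mul_le_mul_of_nonneg_left (by simpa using qs_le_of_nrm2_le v.2) (frobsq_nonneg Φ)
    _ = frobsq Φ := mul_one _
  have h0 : nrm2 (Φ.mulVec ((⟨0, by simp [nrm2_eq, qs]⟩ : {v : Fin N → ℝ // nrm2 v ≤ 1}) : {v : Fin N → ℝ // nrm2 v ≤ 1})) ≤ opnorm Φ := le_ciSup hb _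
  calc (0:ℝ) ≤ nrm2 (Φ.mulVec (0 : Fin N → ℝ)) := nrm2_nonneg _
  _ ≤ opnorm Φ := h0

lemma bddAbove_op {N P : ℕ} (Φ : Matrix (Fin P) (Fin N) ℝ) :
    BddAbove (Set.range fun v : {v : Fin N → ℝ // nrm2 v ≤ 1} => nrm2 (Φ.mulVec v)) := by
  refine ⟨Real.sqrt (frobsq Φ), ?_⟩
  rintro x ⟨v, rfl⟩
  show nrm2 (Φ.mulVec v) ≤ _
  rw [nrm2_eq]
  apply Real.sqrt_le_sqrt
  calc qs (Φ.mulVec v) ≤ frobsq Φ * qs v := qs_mulVec_le _ _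
  _ ≤ frobsq Φ * 1 :=
      mul_le_mul_of_nonneg_left (by simpa using qs_le_of_nrm2_le v.2) (frobsq_nonneg Φ)
  _ = frobsq Φ := mul_one _

lemma nrm2_mulVec_le {N P : ℕ} (Φ : Matrix (Fin P) (Fin N) ℝ) (u : Fin N → ℝ) :
    nrm2 (Φ.mulVec u) ≤ opnorm Φ * nrm2 u := by
  rcases eq_or_ne (nrm2 u) 0 with h0 | h0
  · have hq : qs u = 0 := by rw [qs_eq_nrm2_sq, h0]; ring
    have hu : u = 0 := by
      funext i
      have h1 : ∀ j ∈ Finset.univ, (0:ℝ) ≤ u j ^ 2 := fun _ _ => sq_nonneg _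
      have := (Finset.sum_eq_zero_iff_of_nonneg h1).1 hq i (Finset.mem_univ i)
      exact pow_eq_zero_iff (n := 2) (by norm_num) |>.1 this
    subst hu
    rw [h0, mul_zero, Matrix.mulVec_zero]
    have : qs (0 : Fin P → ℝ) = 0 := by simp [qs]
    rw [nrm2_eq, this, Real.sqrt_zero]
  · have hpos : 0 < nrm2 u := lt_of_le_of_ne (nrm2_nonneg u) (Ne.symm h0)
    set c := nrm2 u
    have hv1 : nrm2 (c⁻¹ • u) ≤ 1 := by
      rw [nrm2_smul, abs_of_pos (inv_pos.2 hpos)]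
      rw [inv_mul_cancel₀ (ne_of_gt hpos)]
    have hle : nrm2 (Φ.mulVec (c⁻¹ • u)) ≤ opnorm Φ :=
      le_ciSup (bddAbove_op Φ) (⟨c⁻¹ • u, hv1⟩ : {v : Fin N → ℝ // nrm2 v ≤ 1})
    rw [Matrix.mulVec_smul, nrm2_smul, abs_of_pos (inv_pos.2 hpos)] at hle
    calc nrm2 (Φ.mulVec u) = c * (c⁻¹ * nrm2 (Φ.mulVec u)) := by
          field_simp
    _ ≤ c * opnorm Φ := by
          apply mul_le_mul_of_nonneg_left hle (le_of_lt hpos)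
    _ = opnorm Φ * c := mul_comm _ _

lemma qs_mulVec_op {N P : ℕ} (Φ : Matrix (Fin P) (Fin N) ℝ) (u : Fin N → ℝ) :
    qs (Φ.mulVec u) ≤ opnorm Φ ^ 2 * qs u := by
  have h := nrm2_mulVec_le Φ u
  have h2 := qs_le_of_nrm2_le h
  calc qs (Φ.mulVec u) ≤ (opnorm Φ * nrm2 u) ^ 2 := h2
  _ = opnorm Φ ^ 2 * qs u := by rw [mul_pow, nrm2_sq]

lemma qs_mulVecT_op {N P : ℕ} (Φ : Matrix (Fin P) (Fin N) ℝ) (v : Fin P → ℝ) :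
    qs (Φᵀ.mulVec v) ≤ opnorm Φ ^ 2 * qs v := by
  have key : qs (Φᵀ.mulVec v) = ∑ i, v i * Φ.mulVec (Φᵀ.mulVec v) i := by
    rw [← dot_mulVecT]
    simp [qs, sq]
  have hcs : (∑ i, v i * Φ.mulVec (Φᵀ.mulVec v) i) ^ 2 ≤ qs v * qs (Φ.mulVec (Φᵀ.mulVec v)) :=
    cs_sq _ _
  have hop := qs_mulVec_op Φ (Φᵀ.mulVec v)
  have h1 : qs (Φᵀ.mulVec v) ^ 2 ≤ qs v * (opnorm Φ ^ 2 * qs (Φᵀ.mulVec v)) := by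
    calc qs (Φᵀ.mulVec v) ^ 2 = (∑ i, v i * Φ.mulVec (Φᵀ.mulVec v) i) ^ 2 := by rw [key]
    _ ≤ qs v * qs (Φ.mulVec (Φᵀ.mulVec v)) := hcs
    _ ≤ qs v * (opnorm Φ ^ 2 * qs (Φᵀ.mulVec v)) :=
        mul_le_mul_of_nonneg_left hop (qs_nonneg v)
  rcases eq_or_lt_of_le (qs_nonneg (Φᵀ.mulVec v)) with h0 | h0
  · rw [← h0]
    have := sq_nonneg (opnorm Φ)
    have := qs_nonneg v
    nlinarith
  · nlinarith [qs_nonneg v]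

noncomputable def soft1 (γ a : ℝ) : ℝ := sgn a * max (|a| - γ) 0

lemma abs_def' (a : ℝ) : |a| = if a ≤ -a then -a else a := by
  rcases le_or_gt a 0 with h | h
  · rw [abs_of_nonpos h, if_pos (by linarith)]
  · rw [abs_of_pos h, if_neg (by push_neg; linarith)]

lemma soft1_eq_clamp {γ : ℝ} (hγ : 0 ≤ γ) (a : ℝ) :
    soft1 γ a = a - max (-γ) (min γ a) := by
  unfold soft1 sgn
  rw [abs_def' a]
  simp only [max_def, min_def]
  split_ifs <;> (try ring_nf) <;> linarith

lemma soft1_lip {γ : ℝ} (hγ : 0 ≤ γ) (a b : ℝ) : |soft1 γ a - soft1 γ b| ≤ |a - b| := by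
  wlog hab : b ≤ a with H
  · have := H hγ b a (by linarith)
    rw [abs_sub_comm] at this
    rwa [abs_sub_comm a b]
  rw [soft1_eq_clamp hγ, soft1_eq_clamp hγ]
  have h1 : max (-γ) (min γ b) ≤ max (-γ) (min γ a) :=
    max_le_max le_rfl (min_le_min le_rfl hab)
  have h2 : max (-γ) (min γ a) - max (-γ) (min γ b) ≤ a - b := by
    simp only [max_def, min_def]
    split_ifs <;> linarith
  rw [abs_of_nonneg (by linarith), abs_of_nonneg (by linarith)]
  linarith

lemma soft1_abs_le (γ a : ℝ) : |soft1 γ a| ≤ max (|a| - γ) 0 := by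
  unfold soft1
  rw [abs_mul]
  have h1 : |sgn a| ≤ 1 := by
    unfold sgn; split_ifs <;> simp
  have h2 : |max (|a| - γ) 0| = max (|a| - γ) 0 := abs_of_nonneg (le_max_right _ _)
  rw [h2]
  nlinarith [le_max_right (|a| - γ) (0:ℝ), abs_nonneg (sgn a)]

lemma soft1_eq_zero {γ a : ℝ} (h : |a| ≤ γ) : soft1 γ a = 0 := by
  unfold soft1
  rw [max_eq_right (by linarith)]
  ring

lemma soft1_fixed {γ a : ℝ} (hγ : 0 ≤ γ) (ha : a ≠ 0) :
    soft1 γ (a + γ * sgn a) = a := by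
  rcases lt_trichotomy a 0 with h | h | h
  · have hs : sgn a = -1 := by unfold sgn; rw [if_neg (by linarith), if_pos h]
    rw [hs]
    have harg : a + γ * (-1) < 0 := by linarith
    unfold soft1 sgn
    rw [if_neg (by linarith), if_pos harg, abs_of_neg harg, max_eq_left (by linarith)]
    ring
  · exact absurd h ha
  · have hs : sgn a = 1 := by unfold sgn; rw [if_pos h]
    rw [hs]
    have harg : 0 < a + γ * 1 := by linarith
    unfold soft1 sgn
    rw [if_pos harg, abs_of_pos harg, max_eq_left (by linarith)]
    ring

lemma max_shift {t c : ℝ} (hc : 0 ≤ c) : max (max t 0 - c) 0 = max (t - c) 0 := by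
  rcases le_total t 0 with h | h
  · rw [max_eq_right h, zero_sub, max_eq_right (by linarith), max_eq_right (by linarith)]
  · rw [max_eq_left h]


set_option maxHeartbeats 1000000 in
/-- finite support identification of Forward–Backward for the
Lasso: under injectivity of `Φ_I` and the irrepresentable condition, for a step
size `0 < τ` with `τ‖Φ‖²_op < 2` there is `C > 0` such that whenever `0 < λ ≤ C`
and `‖w‖ ≤ Cλ`, the FB iterates eventually satisfy `supp(x⁽ⁿ⁾) ⊆ supp(x₀)`. -/
theorem stmt17 {N P : ℕ} (Φ : Matrix (Fin P) (Fin N) ℝ) (x₀ : Fin N → ℝ)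
    (hli : LinearIndependent ℝ (fun i : ↥(suppF x₀) => Φᵀ (i : Fin N)))
    (hIC : ICval Φ (suppF x₀) (fun i => sgn (x₀ i)) < 1)
    (τ : ℝ) (hτ0 : 0 < τ) (hτ2 : τ * opnorm Φ ^ 2 < 2) :
    ∃ C > (0:ℝ), ∀ (lam : ℝ) (w : Fin P → ℝ),
      0 < lam → lam ≤ C → nrm2 w ≤ C * lam →
      ∀ xseq : ℕ → Fin N → ℝ,
        (∀ n, xseq (n + 1) =
          softmap (τ * lam)
            (xseq n + τ • Φᵀ.mulVec ((Φ.mulVec x₀ + w) - Φ.mulVec (xseq n)))) →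
        ∃ n₀ : ℕ, ∀ n ≥ n₀, ∀ i, xseq n i ≠ 0 → x₀ i ≠ 0 := by
  classical
  set I := suppF x₀ with hIdef
  set s : ↥I → ℝ := fun i => sgn (x₀ (i : Fin N)) with hsdef
  set B := colsub Φ I with hBdef
  set A := Bᵀ * B with hAdef
  have hmem : ∀ i, i ∈ I ↔ x₀ i ≠ 0 := by
    intro i; simp [hIdef, suppF]
  -- A is invertible
  have hBcol : ∀ (p : Fin P) (x : ↥I), B p x = Φ p (x : Fin N) := fun p x => rfl
  have hker : ∀ d : ↥I → ℝ, A.mulVec d = 0 → d = 0 := by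
    intro d hd
    have h1 : ∑ j, A.mulVec d j * d j = 0 := by rw [hd]; simp
    have h2 : ∑ j, A.mulVec d j * d j = qs (B.mulVec d) := by
      rw [hAdef, ← Matrix.mulVec_mulVec, dot_mulVecT]
      simp [qs, sq]
    have hq : qs (B.mulVec d) = 0 := by rw [← h2, h1]
    have hBd : B.mulVec d = 0 := qs_eq_zero hq
    have hlii := Fintype.linearIndependent_iff.mp hli d
    have hsum : ∑ i : ↥I, d i • (fun p => Φ p (i : Fin N)) = (0 : Fin P → ℝ) := by
      funext p
      have hp : B.mulVec d p = 0 := by rw [hBd]; rfl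
      calc (∑ i : ↥I, d i • (fun p => Φ p (i : Fin N))) p
          = ∑ i : ↥I, d i * Φ p (i : Fin N) := by
            rw [Finset.sum_apply]
            simp only [Pi.smul_apply, smul_eq_mul]
      _ = B.mulVec d p := by
            simp only [Matrix.mulVec, dotProduct]
            apply Finset.sum_congr rfl
            intro x _
            rw [hBcol]; ring
      _ = 0 := hp
    funext i
    exact hlii (by convert hsum using 2; rfl) i
  have hinj : Function.Injective A.mulVec := by
    intro d1 d2 h12
    have : A.mulVec (d1 - d2) = 0 := by
      rw [Matrix.mulVec_sub, h12, sub_self]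
    have := hker _ this
    exact sub_eq_zero.mp this
  have hAdet : IsUnit A.det := by
    have := Matrix.mulVec_injective_iff_isUnit.mp hinj
    exact (Matrix.isUnit_iff_isUnit_det A).mp this
  have hA1 : A * A⁻¹ = 1 := Matrix.mul_nonsing_inv _ hAdet
  have hA1' : A⁻¹ * A = 1 := Matrix.nonsing_inv_mul _ hAdet
  -- extension-by-zero operator
  set E : (↥I → ℝ) → (Fin N → ℝ) := fun v i => if h : i ∈ I then v ⟨i, h⟩ else 0 with hEdef
  have hE0 : ∀ v (j : Fin N), j ∉ I → E v j = 0 := by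
    intro v j hj; simp only [hEdef, dif_neg hj]
  have hEI : ∀ v (i : Fin N) (h : i ∈ I), E v i = v ⟨i, h⟩ := by
    intro v i h; simp only [hEdef, dif_pos h]
  have hmulE : ∀ v : ↥I → ℝ, Φ.mulVec (E v) = B.mulVec v := by
    intro v
    funext p
    simp only [Matrix.mulVec, dotProduct]
    have h1 : ∑ i : Fin N, Φ p i * E v i = ∑ i ∈ I, Φ p i * E v i :=
      (Finset.sum_subset (Finset.subset_univ I) (fun x _ hx => by rw [hE0 v x hx, mul_zero])).symm
    rw [h1, ← Finset.sum_attach I (fun i => Φ p i * E v i), Finset.univ_eq_attach]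
    apply Finset.sum_congr rfl
    intro x _
    rw [hEI v x x.2, hBcol]
  have hentry : ∀ (u : Fin P → ℝ) (i : Fin N) (h : i ∈ I),
      Φᵀ.mulVec u i = Bᵀ.mulVec u ⟨i, h⟩ := by
    intro u i h; rfl
  set x₀I : ↥I → ℝ := fun i => x₀ (i : Fin N) with hx₀Idef
  have hx₀E : x₀ = E x₀I := by
    funext i
    by_cases h : i ∈ I
    · rw [hEI _ _ h]
    · rw [hE0 _ _ h]
      by_contra hne
      exact h ((hmem i).mpr hne)
  -- constants
  set L := opnorm Φ with hLdef
  set Pm := B * A⁻¹ * Bᵀ with hPmdef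
  set Qm := (1 : Matrix (Fin P) (Fin P) ℝ) - Pm with hQmdef
  set K1 := Real.sqrt (frobsq Φᵀ * frobsq Qm) with hK1def
  set Km := Real.sqrt (frobsq (A⁻¹ * Bᵀ)) with hKmdef
  set Ks := Real.sqrt (qs ((A⁻¹).mulVec s)) with hKsdef
  have hK1n : 0 ≤ K1 := Real.sqrt_nonneg _
  have hKmn : 0 ≤ Km := Real.sqrt_nonneg _
  have hKsn : 0 ≤ Ks := Real.sqrt_nonneg _
  set ICv := ICval Φ I s with hICvdef
  have hICv1 : ICv < 1 := hIC
  set xmin := if h : I.Nonempty then I.inf' h (fun i => |x₀ i|) else 1 with hxmindef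
  have hxminpos : 0 < xmin := by
    rw [hxmindef]
    split_ifs with h
    · rw [Finset.lt_inf'_iff]
      intro i hi
      exact abs_pos.mpr ((hmem i).mp hi)
    · norm_num
  have hxminle : ∀ i ∈ I, xmin ≤ |x₀ i| := by
    intro i hi
    rw [hxmindef]
    rw [dif_pos ⟨i, hi⟩]
    exact Finset.inf'_le _ hi
  set C := min 1 (min (xmin / (2 * (Km + Ks + 1))) ((1 - ICv) / (2 * (K1 + 1)))) with hCdef
  have hC1 : C ≤ 1 := min_le_left _ _
  have hCm : C ≤ xmin / (2 * (Km + Ks + 1)) := le_trans (min_le_right _ _) (min_le_left _ _)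
  have hCk : C ≤ (1 - ICv) / (2 * (K1 + 1)) := le_trans (min_le_right _ _) (min_le_right _ _)
  have hCpos : 0 < C := by
    apply lt_min
    · norm_num
    apply lt_min
    · positivity
    · have : 0 < 1 - ICv := by linarith
      positivity
  refine ⟨C, hCpos, ?_⟩
  intro lam w hlam hlamC hw
  have hwq : qs w ≤ (C * lam) ^ 2 := qs_le_of_nrm2_le hw
  have hClam : 0 < C * lam := mul_pos hCpos hlam
  -- the certificate point
  set y := Φ.mulVec x₀ + w with hydef
  set xs := (A⁻¹).mulVec (Bᵀ.mulVec y - lam • s) with hxsdef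
  set xstar := E xs with hxstardef
  have hxstar0 : ∀ j ∉ I, xstar j = 0 := fun j hj => hE0 _ _ hj
  have hxstarI : ∀ (i : Fin N) (h : i ∈ I), xstar i = xs ⟨i, h⟩ := fun i h => hEI _ _ h
  -- algebraic form of xs
  have hBty : Bᵀ.mulVec y = A.mulVec x₀I + Bᵀ.mulVec w := by
    rw [hydef, hx₀E, hmulE, Matrix.mulVec_add, Matrix.mulVec_mulVec, hAdef]
  have hxs2 : xs = x₀I + (A⁻¹ * Bᵀ).mulVec w - lam • (A⁻¹).mulVec s := by
    rw [hxsdef, hBty, Matrix.mulVec_sub, Matrix.mulVec_add, Matrix.mulVec_mulVec,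
      Matrix.mulVec_mulVec, hA1', Matrix.one_mulVec, Matrix.mulVec_smul]
  -- the residual
  have hres : y - Φ.mulVec xstar = Qm.mulVec w + lam • pFvec Φ I s := by
    have hp : pFvec Φ I s = B.mulVec ((A⁻¹).mulVec s) := by
      rw [pFvec, ← hBdef, ← hAdef]
    rw [hxstardef, hmulE, hxs2]
    rw [Matrix.mulVec_sub, Matrix.mulVec_add, Matrix.mulVec_smul, Matrix.mulVec_mulVec,
      ← Matrix.mul_assoc, ← hPmdef, hp, hydef, hx₀E, hmulE]
    rw [hQmdef, Matrix.sub_mulVec, Matrix.one_mulVec]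
    abel
  set g := Φᵀ.mulVec (y - Φ.mulVec xstar) with hgdef
  have hgI : ∀ (i : Fin N) (h : i ∈ I), g i = lam * sgn (x₀ i) := by
    intro i h
    rw [hgdef, hentry _ _ h]
    have : Bᵀ.mulVec (y - Φ.mulVec xstar) = lam • s := by
      rw [hxstardef, hmulE, Matrix.mulVec_sub, hBty, hxsdef, Matrix.mulVec_mulVec, ← hAdef,
        Matrix.mulVec_mulVec, hA1, Matrix.one_mulVec, hBty]
      abel
    rw [this]
    simp [hsdef]
  -- bound on g outside I
  have hgJ : ∀ j ∉ I, |g j| ≤ lam * (1 + ICv) / 2 := by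
    intro j hj
    have hsplit : g j = (Φᵀ.mulVec (Qm.mulVec w)) j + lam * (Φᵀ.mulVec (pFvec Φ I s)) j := by
      rw [hgdef, hres, Matrix.mulVec_add, Matrix.mulVec_smul]
      simp
    have h1 : |(Φᵀ.mulVec (Qm.mulVec w)) j| ≤ K1 * (C * lam) := by
      apply abs_le_of_sq_le _ (mul_nonneg hK1n hClam.le)
      calc ((Φᵀ.mulVec (Qm.mulVec w)) j) ^ 2
          ≤ (∑ p, Φᵀ j p ^ 2) * qs (Qm.mulVec w) := mulVec_entry_sq_le _ _ _
      _ ≤ frobsq Φᵀ * qs (Qm.mulVec w) :=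
          mul_le_mul_of_nonneg_right (rowsq_le_frobsq _ _) (qs_nonneg _)
      _ ≤ frobsq Φᵀ * (frobsq Qm * qs w) :=
          mul_le_mul_of_nonneg_left (qs_mulVec_le _ _) (frobsq_nonneg _)
      _ ≤ frobsq Φᵀ * (frobsq Qm * (C * lam) ^ 2) := by
          apply mul_le_mul_of_nonneg_left
            (mul_le_mul_of_nonneg_left hwq (frobsq_nonneg _)) (frobsq_nonneg _)
      _ = (K1 * (C * lam)) ^ 2 := by
          have hsq : K1 ^ 2 = frobsq Φᵀ * frobsq Qm := by
            rw [hK1def]; exact Real.sq_sqrt (mul_nonneg (frobsq_nonneg _) (frobsq_nonneg _))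
          linear_combination (-(C * lam) ^ 2) * hsq
    have h2 : |(Φᵀ.mulVec (pFvec Φ I s)) j| ≤ ICv := by
      have heq : (Φᵀ.mulVec (pFvec Φ I s)) j
          = ((Φ.submatrix id ((↑) : {j // j ∉ I} → Fin N))ᵀ.mulVec (pFvec Φ I s)) ⟨j, hj⟩ := rfl
      rw [hICvdef, ICval, linf, heq]
      exact le_ciSup (f := fun jj : {j // j ∉ I} =>
          |((Φ.submatrix id ((↑) : {j // j ∉ I} → Fin N))ᵀ.mulVec (pFvec Φ I s)) jj|)
        (Set.Finite.bddAbove (Set.finite_range _)) ⟨j, hj⟩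
    have hK1C : K1 * C ≤ (1 - ICv) / 2 := by
      have hd : (0:ℝ) < 2 * (K1 + 1) := by linarith
      have hC2 := (le_div_iff₀ hd).mp hCk
      rw [le_div_iff₀ (by norm_num : (0:ℝ) < 2)]
      nlinarith [hCpos.le]
    have habs : |g j| ≤ K1 * (C * lam) + lam * ICv := by
      rw [hsplit]
      refine (abs_add_le _ _).trans ?_
      rw [abs_mul, abs_of_pos hlam]
      exact add_le_add h1 (mul_le_mul_of_nonneg_left h2 hlam.le)
    have : K1 * (C * lam) ≤ (1 - ICv) / 2 * lam := by
      rw [← mul_assoc]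
      exact mul_le_mul_of_nonneg_right hK1C hlam.le
    linarith
  -- sign condition on I
  have hxsclose : ∀ (i : Fin N) (h : i ∈ I), |xs ⟨i, h⟩ - x₀ i| < |x₀ i| := by
    intro i h
    have he : xs ⟨i, h⟩ - x₀ i
        = ((A⁻¹ * Bᵀ).mulVec w) ⟨i, h⟩ - lam * ((A⁻¹).mulVec s) ⟨i, h⟩ := by
      rw [hxs2]
      have : x₀I ⟨i, h⟩ = x₀ i := rfl
      simp only [Pi.sub_apply, Pi.add_apply, Pi.smul_apply, smul_eq_mul, this]
      ring
    have h1 : |((A⁻¹ * Bᵀ).mulVec w) ⟨i, h⟩| ≤ Km * (C * lam) := by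
      apply abs_le_of_sq_le _ (mul_nonneg hKmn hClam.le)
      calc (((A⁻¹ * Bᵀ).mulVec w) ⟨i, h⟩) ^ 2
          ≤ (∑ p, (A⁻¹ * Bᵀ) ⟨i, h⟩ p ^ 2) * qs w := mulVec_entry_sq_le _ _ _
      _ ≤ frobsq (A⁻¹ * Bᵀ) * qs w :=
          mul_le_mul_of_nonneg_right (rowsq_le_frobsq _ _) (qs_nonneg _)
      _ ≤ frobsq (A⁻¹ * Bᵀ) * (C * lam) ^ 2 :=
          mul_le_mul_of_nonneg_left hwq (frobsq_nonneg _)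
      _ = (Km * (C * lam)) ^ 2 := by
          have hsq : Km ^ 2 = frobsq (A⁻¹ * Bᵀ) := by
            rw [hKmdef]; exact Real.sq_sqrt (frobsq_nonneg _)
          linear_combination (-(C * lam) ^ 2) * hsq
    have h2 : |((A⁻¹).mulVec s) ⟨i, h⟩| ≤ Ks := by
      apply abs_le_of_sq_le _ hKsn
      rw [hKsdef, Real.sq_sqrt (qs_nonneg _)]
      exact entry_sq_le_qs _ _
    have hb : |xs ⟨i, h⟩ - x₀ i| ≤ Km * (C * lam) + lam * Ks := by
      rw [he, sub_eq_add_neg]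
      refine (abs_add_le _ _).trans ?_
      rw [abs_neg, abs_mul, abs_of_pos hlam]
      exact add_le_add h1 (mul_le_mul_of_nonneg_left h2 hlam.le)
    have e1 : Km * (C * lam) ≤ Km * (C * C) :=
      mul_le_mul_of_nonneg_left (mul_le_mul_of_nonneg_left hlamC hCpos.le) hKmn
    have e2 : Km * (C * C) ≤ Km * C := by
      have : C * C ≤ C := by
        calc C * C ≤ 1 * C := mul_le_mul_of_nonneg_right hC1 hCpos.le
        _ = C := one_mul C
      exact mul_le_mul_of_nonneg_left this hKmn
    have e3 : lam * Ks ≤ C * Ks := mul_le_mul_of_nonneg_right hlamC hKsn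
    have hd : (0:ℝ) < 2 * (Km + Ks + 1) := by linarith
    have hC2 := (le_div_iff₀ hd).mp hCm
    have hnum : Km * (C * lam) + lam * Ks < xmin := by linarith
    exact lt_of_le_of_lt hb (lt_of_lt_of_le hnum (hxminle i h))
  have hsgn : ∀ (i : Fin N) (h : i ∈ I), xstar i ≠ 0 ∧ sgn (xstar i) = sgn (x₀ i) := by
    intro i h
    rw [hxstarI i h]
    exact sgn_close (hxsclose i h)
  -- fixed point property
  have hτlam : 0 ≤ τ * lam := by positivity
  have hfix : ∀ i, soft1 (τ * lam) (xstar i + τ * g i) = xstar i := by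
    intro i
    by_cases h : i ∈ I
    · obtain ⟨hne, hsg⟩ := hsgn i h
      have harg : xstar i + τ * g i = xstar i + (τ * lam) * sgn (xstar i) := by
        rw [hgI i h, hsg]; ring
      rw [harg, soft1_fixed hτlam hne]
    · have hgle : |g i| ≤ lam := by
        have := hgJ i h
        nlinarith [hlam.le]
      rw [hxstar0 i h]
      have h1 : |0 + τ * g i| ≤ τ * lam := by
        rw [zero_add, abs_mul, abs_of_pos hτ0]
        exact mul_le_mul_of_nonneg_left hgle hτ0.le
      rw [soft1_eq_zero h1]
  -- dynamics of the iterates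
  intro xseq hrec
  set ε := τ * (2 - τ * L ^ 2) with hεdef
  have hεpos : 0 < ε := by
    have h2 : 0 < 2 - τ * L ^ 2 := by linarith
    exact mul_pos hτ0 h2
  set u : ℕ → Fin N → ℝ := fun n => xseq n - xstar with hudef
  set v : ℕ → Fin N → ℝ := fun n => Φᵀ.mulVec (Φ.mulVec (u n)) with hvdef
  have hu_apply : ∀ n i, u n i = xseq n i - xstar i := fun n i => rfl
  have hy' : ∀ n : ℕ, (Φ.mulVec x₀ + w) - Φ.mulVec (xseq n)
      = (y - Φ.mulVec xstar) - Φ.mulVec (u n) := by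
    intro n
    have : Φ.mulVec (u n) = Φ.mulVec (xseq n) - Φ.mulVec xstar := by
      rw [hudef]
      exact Matrix.mulVec_sub Φ _ _
    rw [this, ← hydef]
    abel
  have hinner : ∀ n, xseq n + τ • Φᵀ.mulVec ((Φ.mulVec x₀ + w) - Φ.mulVec (xseq n))
      = fun i => (xstar i + τ * g i) + (u n i - τ * v n i) := by
    intro n
    have h1 : Φᵀ.mulVec ((Φ.mulVec x₀ + w) - Φ.mulVec (xseq n)) = g - v n := by
      rw [hy' n, Matrix.mulVec_sub, ← hgdef]
    rw [h1]
    funext i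
    simp only [Pi.add_apply, Pi.smul_apply, Pi.sub_apply, smul_eq_mul, hu_apply]
    ring
  -- Fejér-type inequality
  have hfej : ∀ n, qs (u (n+1)) + ε * qs (Φ.mulVec (u n)) ≤ qs (u n) := by
    intro n
    have hstep : ∀ i, (u (n+1) i) ^ 2 ≤ (u n i - τ * v n i) ^ 2 := by
      intro i
      have e1 : u (n+1) i = soft1 (τ*lam) ((xstar i + τ*g i) + (u n i - τ * v n i))
          - soft1 (τ*lam) (xstar i + τ*g i) := by
        rw [hu_apply, hfix i]
        have h2 := congrFun (hrec n) i
        rw [h2, hinner n]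
        rfl
      have e2 : |u (n+1) i| ≤ |u n i - τ * v n i| := by
        rw [e1]
        have h3 := soft1_lip hτlam ((xstar i + τ*g i) + (u n i - τ * v n i)) (xstar i + τ*g i)
        simpa using h3
      calc (u (n+1) i)^2 = |u (n+1) i|^2 := (sq_abs _).symm
      _ ≤ |u n i - τ * v n i|^2 := pow_le_pow_left₀ (abs_nonneg _) e2 2
      _ = (u n i - τ * v n i)^2 := sq_abs _
    have hsum : qs (u (n+1)) ≤ ∑ i, (u n i - τ * v n i)^2 :=
      Finset.sum_le_sum (fun i _ => hstep i)
    have hexp : ∑ i, (u n i - τ * v n i)^2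
        = qs (u n) - 2*τ*(∑ i, u n i * v n i) + τ^2 * qs (v n) := by
      calc ∑ i, (u n i - τ * v n i)^2
          = ∑ i, (u n i^2 - 2*τ*(u n i * v n i) + τ^2 * v n i^2) := by
            apply Finset.sum_congr rfl; intros; ring
      _ = qs (u n) - 2*τ*(∑ i, u n i * v n i) + τ^2 * qs (v n) := by
            rw [Finset.sum_add_distrib, Finset.sum_sub_distrib, ← Finset.mul_sum,
              ← Finset.mul_sum]
            simp only [qs]
    have hcross : ∑ i, u n i * v n i = qs (Φ.mulVec (u n)) := by
      have h4 := dot_mulVecT Φ (Φ.mulVec (u n)) (u n)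
      calc ∑ i, u n i * v n i = ∑ i, v n i * u n i := by
            apply Finset.sum_congr rfl; intros; ring
      _ = ∑ i, (Φ.mulVec (u n)) i * (Φ.mulVec (u n)) i := h4
      _ = qs (Φ.mulVec (u n)) := by rw [qs]; apply Finset.sum_congr rfl; intros; rw [sq]
    have hvb : qs (v n) ≤ L^2 * qs (Φ.mulVec (u n)) := qs_mulVecT_op Φ (Φ.mulVec (u n))
    have hvb2 : τ^2 * qs (v n) ≤ τ^2 * (L^2 * qs (Φ.mulVec (u n))) :=
      mul_le_mul_of_nonneg_left hvb (sq_nonneg τ)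
    rw [hcross] at hexp
    rw [hεdef]
    nlinarith [hsum, hexp, hvb2]
  -- summability and vanishing
  set aa : ℕ → ℝ := fun n => qs (Φ.mulVec (u n)) with haadef
  have haan : ∀ n, 0 ≤ aa n := fun n => qs_nonneg _
  have hpart : ∀ m, ∑ k ∈ Finset.range m, aa k ≤ qs (u 0) / ε := by
    intro m
    rw [le_div_iff₀ hεpos]
    have h1 : ∀ k ∈ Finset.range m, ε * aa k ≤ qs (u k) - qs (u (k+1)) := by
      intro k _
      have := hfej k
      linarith
    have h2 : ∑ k ∈ Finset.range m, ε * aa k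
        ≤ ∑ k ∈ Finset.range m, (qs (u k) - qs (u (k+1))) := Finset.sum_le_sum h1
    rw [Finset.sum_range_sub' (fun k => qs (u k)), ← Finset.mul_sum] at h2
    have h3 := qs_nonneg (u m)
    have h4 : ε * ∑ k ∈ Finset.range m, aa k ≤ qs (u 0) := by linarith
    linarith [h4, mul_comm ε (∑ k ∈ Finset.range m, aa k)]
  have hsummable : Summable aa := summable_of_sum_range_le haan hpart
  have hatend : Filter.Tendsto aa Filter.atTop (nhds 0) := hsummable.tendsto_atTop_zero
  have hvtend : ∀ j : Fin N, Filter.Tendsto (fun n => |v n j|) Filter.atTop (nhds 0) := by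
    intro j
    have hle : ∀ n, |v n j| ≤ Real.sqrt (L^2 * aa n) := by
      intro n
      rw [← Real.sqrt_sq_eq_abs]
      apply Real.sqrt_le_sqrt
      calc (v n j)^2 ≤ qs (v n) := entry_sq_le_qs _ _
      _ ≤ L^2 * aa n := qs_mulVecT_op Φ (Φ.mulVec (u n))
    have hg0 : Filter.Tendsto (fun n => L^2 * aa n) Filter.atTop (nhds 0) := by
      have := hatend.const_mul (L^2)
      simpa using this
    have hgs : Filter.Tendsto (fun n => Real.sqrt (L^2 * aa n)) Filter.atTop (nhds 0) := by
      have hcont := (Real.continuous_sqrt.tendsto 0).comp hg0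
      simpa [Function.comp_def] using hcont
    exact squeeze_zero (fun n => abs_nonneg _) hle hgs
  -- kill coordinates outside the support
  set δ := lam * (1 - ICv) / 2 with hδdef
  have h1IC : 0 < 1 - ICv := by linarith
  have hδpos : 0 < δ := by rw [hδdef]; positivity
  have hkill : ∀ j : Fin N, x₀ j = 0 → ∀ᶠ n in Filter.atTop, xseq n j = 0 := by
    intro j hj0
    have hj : j ∉ I := fun h => ((hmem j).mp h) hj0
    have hgj : |g j| ≤ lam - δ := by
      have := hgJ j hj
      rw [hδdef]
      linarith
    set c := τ * δ / 2 with hcdef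
    have hcpos : 0 < c := by rw [hcdef]; positivity
    obtain ⟨n₁, hn₁⟩ : ∃ n₁, ∀ n ≥ n₁, |v n j| < δ / 2 := by
      have hev := (hvtend j).eventually_lt_const (show (0:ℝ) < δ/2 by positivity)
      rw [Filter.eventually_atTop] at hev
      exact hev
    have hdec : ∀ n, n ≥ n₁ → |xseq (n+1) j| ≤ max (|xseq n j| - c) 0 := by
      intro n hn
      have h0 := congrFun (hinner n) j
      have harg : (xseq n + τ • Φᵀ.mulVec ((Φ.mulVec x₀ + w) - Φ.mulVec (xseq n))) j
          = xseq n j + τ * g j - τ * v n j := by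
        rw [h0]
        rw [hxstar0 j hj, hu_apply, hxstar0 j hj]
        ring
      have hxeq : xseq (n+1) j = soft1 (τ*lam) (xseq n j + τ * g j - τ * v n j) := by
        have h1 := congrFun (hrec n) j
        rw [h1, ← harg]
        rfl
      rw [hxeq]
      refine (soft1_abs_le _ _).trans ?_
      apply max_le_max _ le_rfl
      have t1 : |xseq n j + τ * g j - τ * v n j| ≤ |xseq n j + τ * g j| + |τ * v n j| := by
        rw [sub_eq_add_neg]
        refine (abs_add_le _ _).trans ?_
        rw [abs_neg]
      have t2 : |xseq n j + τ * g j| ≤ |xseq n j| + |τ * g j| := abs_add_le _ _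
      have t3 : |τ * g j| ≤ τ * (lam - δ) := by
        rw [abs_mul, abs_of_pos hτ0]
        exact mul_le_mul_of_nonneg_left hgj hτ0.le
      have t4 : |τ * v n j| ≤ τ * (δ/2) := by
        rw [abs_mul, abs_of_pos hτ0]
        exact mul_le_mul_of_nonneg_left (le_of_lt (hn₁ n hn)) hτ0.le
      have hceq : c = τ * δ / 2 := hcdef
      linarith
    have hiter : ∀ k : ℕ, |xseq (n₁ + k) j| ≤ max (|xseq n₁ j| - k * c) 0 := by
      intro k
      induction k with
      | zero =>
        simp only [Nat.add_zero, Nat.cast_zero, zero_mul, sub_zero]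
        exact le_max_left _ _
      | succ k ih =>
        have h1 : |xseq (n₁ + k + 1) j| ≤ max (|xseq (n₁+k) j| - c) 0 :=
          hdec _ (Nat.le_add_right _ _)
        have h2 : max (|xseq (n₁+k) j| - c) 0 ≤ max (max (|xseq n₁ j| - k*c) 0 - c) 0 :=
          max_le_max (sub_le_sub_right ih c) le_rfl
        have h3 : max (max (|xseq n₁ j| - k*c) 0 - c) 0 = max (|xseq n₁ j| - (k*c + c)) 0 := by
          rw [max_shift hcpos.le, sub_sub]
        have h4 : |xseq n₁ j| - ((k:ℝ)*c + c) = |xseq n₁ j| - ((k:ℕ)+1 : ℕ) * c := by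
          push_cast
          ring
        calc |xseq (n₁ + (k+1)) j| = |xseq (n₁ + k + 1) j| := by rw [← Nat.add_assoc]
        _ ≤ max (|xseq (n₁+k) j| - c) 0 := h1
        _ ≤ max (max (|xseq n₁ j| - k*c) 0 - c) 0 := h2
        _ = max (|xseq n₁ j| - (k*c + c)) 0 := h3
        _ = max (|xseq n₁ j| - ((k+1 : ℕ):ℝ) * c) 0 := by rw [h4]
    obtain ⟨K, hK⟩ := exists_nat_gt (|xseq n₁ j| / c)
    rw [Filter.eventually_atTop]
    refine ⟨n₁ + K, fun n hn => ?_⟩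
    have hn₁n : n₁ ≤ n := le_trans (Nat.le_add_right n₁ K) hn
    obtain ⟨k, rfl⟩ := Nat.exists_eq_add_of_le hn₁n
    have hkK : K ≤ k := by omega
    have hB : |xseq n₁ j| < K * c := (div_lt_iff₀ hcpos).mp hK
    have hKk : (K:ℝ) * c ≤ (k:ℝ) * c :=
      mul_le_mul_of_nonneg_right (by exact_mod_cast hkK) hcpos.le
    have h5 := hiter k
    have h6 : max (|xseq n₁ j| - k * c) 0 = 0 := max_eq_right (by linarith)
    rw [h6] at h5
    exact abs_nonpos_iff.mp h5
  have hall : ∀ᶠ n in Filter.atTop, ∀ j : Fin N, x₀ j = 0 → xseq n j = 0 := by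
    apply Filter.eventually_all.mpr
    intro j
    by_cases hj : x₀ j = 0
    · exact (hkill j hj).mono (fun n h _ => h)
    · exact Filter.Eventually.of_forall (fun n h => absurd h hj)
  rw [Filter.eventually_atTop] at hall
  obtain ⟨n₀, hn₀⟩ := hall
  exact ⟨n₀, fun n hn i hxi => fun h0 => hxi (hn₀ n hn i h0)⟩
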